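/- Let Ĝ be a finite simple graph, U ⊆ V(Ĝ), O = V(Ĝ) ∖ U, r ≥ 2, c ≥ 1 and k natural numbers. Let G' be obtained from Ĝ by adding new vertices a₁, a₂, b₁, …, b_c, adding the edges a₂b₁, …, a₂b_c, connecting a₁ to every vertex of O by a path of length r (each such connection using its own r−1 new internal vertices), and connecting a₁ to a₂ by a path of length r−1. Then G' has an (r,c)-scattered set of size at least k+c if and only if there is a set I ⊆ U of size at least k with |N^r_{Ĝ}[v] ∩ I| ≤ c for every vertex v of Ĝ. -/

import Mathlib

/-- Graph obtained from `G` by adding new vertices `B` and, for each `p : P`, a fresh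
path of length `len p` from `src p` to `dst p`: the path has `len p - 1` new internal
vertices (the pairs `⟨p, i⟩`); a connection of length `1` is just an edge. -/
def SimpleGraph.addPaths {V : Type*} (G : SimpleGraph V) (B P : Type*)
    (src dst : P → V ⊕ B) (len : P → ℕ) :
    SimpleGraph ((V ⊕ B) ⊕ (Σ p : P, Fin (len p - 1))) :=
  SimpleGraph.fromRel (fun x y =>
    (∃ u w, G.Adj u w ∧ x = .inl (.inl u) ∧ y = .inl (.inl w)) ∨
    (∃ p : P, len p = 1 ∧ x = .inl (src p) ∧ y = .inl (dst p)) ∨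
    (∃ p : P, ∃ i : Fin (len p - 1), (i : ℕ) = 0 ∧ x = .inl (src p) ∧ y = .inr ⟨p, i⟩) ∨
    (∃ p : P, ∃ i j : Fin (len p - 1), (i : ℕ) + 1 = (j : ℕ) ∧ x = .inr ⟨p, i⟩ ∧ y = .inr ⟨p, j⟩) ∨
    (∃ p : P, ∃ i : Fin (len p - 1), (i : ℕ) + 2 = len p ∧ x = .inr ⟨p, i⟩ ∧ y = .inl (dst p)))

/- New end-vertices for statement 8: `a₁ = .inl 0`, `a₂ = .inl 1` (in `Fin 2`) and
`b₁, …, b_c = .inr i` (in `Fin c`).  Connections: for each `o ∈ O = Uᶜ` a path of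
length `r` from `a₁` to `o`; a path of length `r − 1` from `a₁` to `a₂`; and the
edges `a₂bᵢ` (connections of length `1`). -/

/-- Sources of the added connections. -/
def src8 {V : Type*} [Fintype V] [DecidableEq V] (U : Finset V) (c : ℕ) :
    ({o : V // o ∈ Uᶜ} ⊕ (Unit ⊕ Fin c)) → V ⊕ (Fin 2 ⊕ Fin c)
  | .inl _ => .inr (.inl 0)          -- a₁–o paths start at a₁
  | .inr (.inl _) => .inr (.inl 0)   -- a₁–a₂ path starts at a₁
  | .inr (.inr _) => .inr (.inl 1)   -- edges a₂bᵢ start at a₂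

/-- Targets of the added connections. -/
def dst8 {V : Type*} [Fintype V] [DecidableEq V] (U : Finset V) (c : ℕ) :
    ({o : V // o ∈ Uᶜ} ⊕ (Unit ⊕ Fin c)) → V ⊕ (Fin 2 ⊕ Fin c)
  | .inl o => .inl o.1
  | .inr (.inl _) => .inr (.inl 1)
  | .inr (.inr i) => .inr (.inr i)

/-- Lengths of the added connections. -/
def len8 {V : Type*} [Fintype V] [DecidableEq V] (U : Finset V) (c r : ℕ) :
    ({o : V // o ∈ Uᶜ} ⊕ (Unit ⊕ Fin c)) → ℕ
  | .inl _ => r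
  | .inr (.inl _) => r - 1
  | .inr (.inr _) => 1


section Aux

open SimpleGraph

lemma pot_le {W : Type*} {G : SimpleGraph W} (φ : W → ℤ)
    (hφ : ∀ u v, G.Adj u v → φ u ≤ φ v + 1) :
    ∀ {u v : W} (w : G.Walk u v), φ u ≤ φ v + w.length := by
  intro u v w
  induction w with
  | nil => simp
  | cons h p ih =>
    have h1 := hφ _ _ h
    simp only [Walk.length_cons]
    push_cast
    omega

variable {V : Type*} [Fintype V] [DecidableEq V] (Ghat : SimpleGraph V) (U : Finset V) (c r : ℕ)

/-- Vertex type of the augmented graph. -/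
abbrev V8 := (V ⊕ (Fin 2 ⊕ Fin c)) ⊕
  (Σ p : ({o : V // o ∈ Uᶜ} ⊕ (Unit ⊕ Fin c)), Fin (len8 U c r p - 1))

/-- The augmented graph. -/
abbrev G8 : SimpleGraph (V8 U c r) :=
  Ghat.addPaths (Fin 2 ⊕ Fin c) ({o : V // o ∈ Uᶜ} ⊕ (Unit ⊕ Fin c))
    (src8 U c) (dst8 U c) (len8 U c r)

variable {Ghat U c r}

/-- Potential: capped distance to the original vertex set `V`. -/
def psi8 : V8 U c r → ℤ
  | .inl (.inl _) => 0
  | .inl (.inr (.inl j)) => if j = 0 then (r : ℤ) else (r : ℤ) + 1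
  | .inl (.inr (.inr _)) => (r : ℤ) + 1
  | .inr ⟨.inl _, i⟩ => (r : ℤ) - 1 - (i : ℕ)
  | .inr ⟨.inr _, _⟩ => (r : ℤ) + 1

/-- Potential: capped distance to the vertices `b₁, …, b_c`. -/
def gamma8 : V8 U c r → ℤ
  | .inl (.inl _) => (r : ℤ) + 1
  | .inl (.inr (.inl j)) => if j = 0 then (r : ℤ) else 1
  | .inl (.inr (.inr _)) => 0
  | .inr ⟨.inl _, _⟩ => (r : ℤ) + 1
  | .inr ⟨.inr _, i⟩ => (r : ℤ) - 1 - (i : ℕ)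

/-- Potential: capped distance to `a₁`. -/
def d18 (U : Finset V) : V8 U c r → ℤ
  | .inl (.inl v) => if v ∈ U then (r : ℤ) + 1 else (r : ℤ)
  | .inl (.inr (.inl j)) => if j = 0 then 0 else (r : ℤ) - 1
  | .inl (.inr (.inr _)) => (r : ℤ)
  | .inr ⟨.inl _, i⟩ => (i : ℕ) + 1
  | .inr ⟨.inr _, i⟩ => (i : ℕ) + 1


/-- Canonical (ordered) list of the possible adjacency cases in the augmented graph. -/
def Rel8 (Ghat : SimpleGraph V) (U : Finset V) (c r : ℕ) : V8 U c r → V8 U c r → Prop :=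
  fun x y =>
  (∃ u w, Ghat.Adj u w ∧ x = .inl (.inl u) ∧ y = .inl (.inl w)) ∨
  (r = 2 ∧ x = .inl (.inr (.inl 0)) ∧ y = .inl (.inr (.inl 1))) ∨
  (∃ j : Fin c, x = .inl (.inr (.inl 1)) ∧ y = .inl (.inr (.inr j))) ∨
  (∃ (o : {o : V // o ∈ Uᶜ}) (i : Fin (r - 1)), (i : ℕ) = 0 ∧
      x = .inl (.inr (.inl 0)) ∧ y = .inr ⟨.inl o, i⟩) ∨
  (∃ i : Fin (r - 1 - 1), (i : ℕ) = 0 ∧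
      x = .inl (.inr (.inl 0)) ∧ y = .inr ⟨.inr (.inl ()), i⟩) ∨
  (∃ (o : {o : V // o ∈ Uᶜ}) (i j : Fin (r - 1)), (i : ℕ) + 1 = (j : ℕ) ∧
      x = .inr ⟨.inl o, i⟩ ∧ y = .inr ⟨.inl o, j⟩) ∨
  (∃ i j : Fin (r - 1 - 1), (i : ℕ) + 1 = (j : ℕ) ∧
      x = .inr ⟨.inr (.inl ()), i⟩ ∧ y = .inr ⟨.inr (.inl ()), j⟩) ∨
  (∃ (o : {o : V // o ∈ Uᶜ}) (i : Fin (r - 1)), (i : ℕ) + 2 = r ∧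
      x = .inr ⟨.inl o, i⟩ ∧ y = .inl (.inl o.1)) ∨
  (∃ i : Fin (r - 1 - 1), (i : ℕ) + 2 = r - 1 ∧
      x = .inr ⟨.inr (.inl ()), i⟩ ∧ y = .inl (.inr (.inl 1)))

lemma adj8_iff (hr : 2 ≤ r) {x y : V8 U c r} :
    (G8 Ghat U c r).Adj x y ↔ x ≠ y ∧ (Rel8 Ghat U c r x y ∨ Rel8 Ghat U c r y x) := by
  unfold G8 SimpleGraph.addPaths
  rw [SimpleGraph.fromRel_adj]
  refine and_congr_right fun hne => ?_
  have key : ∀ a b : V8 U c r,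
      ((∃ u w, Ghat.Adj u w ∧ a = .inl (.inl u) ∧ b = .inl (.inl w)) ∨
       (∃ p, len8 U c r p = 1 ∧ a = .inl (src8 U c p) ∧ b = .inl (dst8 U c p)) ∨
       (∃ p, ∃ i : Fin (len8 U c r p - 1), (i : ℕ) = 0 ∧
          a = .inl (src8 U c p) ∧ b = .inr ⟨p, i⟩) ∨
       (∃ p, ∃ i j : Fin (len8 U c r p - 1), (i : ℕ) + 1 = (j : ℕ) ∧
          a = .inr ⟨p, i⟩ ∧ b = .inr ⟨p, j⟩) ∨
       (∃ p, ∃ i : Fin (len8 U c r p - 1), (i : ℕ) + 2 = len8 U c r p ∧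
          a = .inr ⟨p, i⟩ ∧ b = .inl (dst8 U c p))) ↔ Rel8 Ghat U c r a b := by
    intro a b
    constructor
    · rintro (⟨u, w, h, rfl, rfl⟩ | ⟨(o | u | j), h, rfl, rfl⟩ |
        ⟨(o | u | j), i, hi, rfl, rfl⟩ | ⟨(o | u | j), i, jj, hij, rfl, rfl⟩ |
        ⟨(o | u | j), i, hi, rfl, rfl⟩)
      · exact Or.inl ⟨u, w, h, rfl, rfl⟩
      · simp only [len8] at h; omega
      · simp only [len8] at h
        exact Or.inr (Or.inl ⟨by omega, rfl, rfl⟩)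
      · exact Or.inr (Or.inr (Or.inl ⟨j, rfl, rfl⟩))
      · exact Or.inr (Or.inr (Or.inr (Or.inl ⟨o, i, hi, rfl, rfl⟩)))
      · exact Or.inr (Or.inr (Or.inr (Or.inr (Or.inl ⟨i, hi, rfl, rfl⟩))))
      · exact absurd i.isLt (by simp [len8])
      · exact Or.inr (Or.inr (Or.inr (Or.inr (Or.inr (Or.inl ⟨o, i, jj, hij, rfl, rfl⟩)))))
      · exact Or.inr (Or.inr (Or.inr (Or.inr (Or.inr (Or.inr (Or.inl ⟨i, jj, hij, rfl, rfl⟩))))))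
      · exact absurd i.isLt (by simp [len8])
      · simp only [len8] at hi
        exact Or.inr (Or.inr (Or.inr (Or.inr (Or.inr (Or.inr (Or.inr (Or.inl ⟨o, i, hi, rfl, rfl⟩)))))))
      · simp only [len8] at hi
        exact Or.inr (Or.inr (Or.inr (Or.inr (Or.inr (Or.inr (Or.inr (Or.inr ⟨i, hi, rfl, rfl⟩)))))))
      · exact absurd i.isLt (by simp [len8])
    · rintro (⟨u, w, h, rfl, rfl⟩ | ⟨h2, rfl, rfl⟩ | ⟨j, rfl, rfl⟩ | ⟨o, i, hi, rfl, rfl⟩ |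
        ⟨i, hi, rfl, rfl⟩ | ⟨o, i, j, hij, rfl, rfl⟩ | ⟨i, j, hij, rfl, rfl⟩ |
        ⟨o, i, hi, rfl, rfl⟩ | ⟨i, hi, rfl, rfl⟩)
      · exact Or.inl ⟨u, w, h, rfl, rfl⟩
      · exact Or.inr (Or.inl ⟨.inr (.inl ()), by simp [len8]; omega, rfl, rfl⟩)
      · exact Or.inr (Or.inl ⟨.inr (.inr j), by simp [len8], rfl, rfl⟩)
      · exact Or.inr (Or.inr (Or.inl ⟨.inl o, i, hi, rfl, rfl⟩))
      · exact Or.inr (Or.inr (Or.inl ⟨.inr (.inl ()), i, hi, rfl, rfl⟩))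
      · exact Or.inr (Or.inr (Or.inr (Or.inl ⟨.inl o, i, j, hij, rfl, rfl⟩)))
      · exact Or.inr (Or.inr (Or.inr (Or.inl ⟨.inr (.inl ()), i, j, hij, rfl, rfl⟩)))
      · exact Or.inr (Or.inr (Or.inr (Or.inr ⟨.inl o, i, by simp [len8]; omega, rfl, rfl⟩)))
      · exact Or.inr (Or.inr (Or.inr (Or.inr ⟨.inr (.inl ()), i, by simp [len8]; omega, rfl, rfl⟩)))
  rw [key, key]

lemma rel8_bound (hr : 2 ≤ r) (φ : V8 U c r → ℤ)
    (h1 : ∀ u w, Ghat.Adj u w → φ (.inl (.inl u)) ≤ φ (.inl (.inl w)) + 1 ∧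
        φ (.inl (.inl w)) ≤ φ (.inl (.inl u)) + 1)
    (h2 : r = 2 → φ (.inl (.inr (.inl 0))) ≤ φ (.inl (.inr (.inl 1))) + 1 ∧
        φ (.inl (.inr (.inl 1))) ≤ φ (.inl (.inr (.inl 0))) + 1)
    (h3 : ∀ j : Fin c, φ (.inl (.inr (.inl 1))) ≤ φ (.inl (.inr (.inr j))) + 1 ∧
        φ (.inl (.inr (.inr j))) ≤ φ (.inl (.inr (.inl 1))) + 1)
    (h4 : ∀ (o : {o : V // o ∈ Uᶜ}) (i : Fin (r - 1)), (i : ℕ) = 0 →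
        φ (.inl (.inr (.inl 0))) ≤ φ (.inr ⟨.inl o, i⟩) + 1 ∧
        φ (.inr ⟨.inl o, i⟩) ≤ φ (.inl (.inr (.inl 0))) + 1)
    (h5 : ∀ i : Fin (r - 1 - 1), (i : ℕ) = 0 →
        φ (.inl (.inr (.inl 0))) ≤ φ (.inr ⟨.inr (.inl ()), i⟩) + 1 ∧
        φ (.inr ⟨.inr (.inl ()), i⟩) ≤ φ (.inl (.inr (.inl 0))) + 1)
    (h6 : ∀ (o : {o : V // o ∈ Uᶜ}) (i j : Fin (r - 1)), (i : ℕ) + 1 = (j : ℕ) →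
        φ (.inr ⟨.inl o, i⟩) ≤ φ (.inr ⟨.inl o, j⟩) + 1 ∧
        φ (.inr ⟨.inl o, j⟩) ≤ φ (.inr ⟨.inl o, i⟩) + 1)
    (h7 : ∀ i j : Fin (r - 1 - 1), (i : ℕ) + 1 = (j : ℕ) →
        φ (.inr ⟨.inr (.inl ()), i⟩) ≤ φ (.inr ⟨.inr (.inl ()), j⟩) + 1 ∧
        φ (.inr ⟨.inr (.inl ()), j⟩) ≤ φ (.inr ⟨.inr (.inl ()), i⟩) + 1)
    (h8 : ∀ (o : {o : V // o ∈ Uᶜ}) (i : Fin (r - 1)), (i : ℕ) + 2 = r →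
        φ (.inr ⟨.inl o, i⟩) ≤ φ (.inl (.inl o.1)) + 1 ∧
        φ (.inl (.inl o.1)) ≤ φ (.inr ⟨.inl o, i⟩) + 1)
    (h9 : ∀ i : Fin (r - 1 - 1), (i : ℕ) + 2 = r - 1 →
        φ (.inr ⟨.inr (.inl ()), i⟩) ≤ φ (.inl (.inr (.inl 1))) + 1 ∧
        φ (.inl (.inr (.inl 1))) ≤ φ (.inr ⟨.inr (.inl ()), i⟩) + 1) :
    ∀ u v, (G8 Ghat U c r).Adj u v → φ u ≤ φ v + 1 := by
  have key : ∀ x y, Rel8 Ghat U c r x y → φ x ≤ φ y + 1 ∧ φ y ≤ φ x + 1 := by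
    rintro x y (⟨u, w, h, rfl, rfl⟩ | ⟨hh, rfl, rfl⟩ | ⟨j, rfl, rfl⟩ | ⟨o, i, hi, rfl, rfl⟩ |
      ⟨i, hi, rfl, rfl⟩ | ⟨o, i, j, hij, rfl, rfl⟩ | ⟨i, j, hij, rfl, rfl⟩ |
      ⟨o, i, hi, rfl, rfl⟩ | ⟨i, hi, rfl, rfl⟩)
    · exact h1 _ _ h
    · exact h2 hh
    · exact h3 j
    · exact h4 o i hi
    · exact h5 i hi
    · exact h6 o i j hij
    · exact h7 i j hij
    · exact h8 o i hi
    · exact h9 i hi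
  intro u v h
  rw [adj8_iff hr] at h
  rcases h.2 with h' | h'
  · exact (key _ _ h').1
  · exact (key _ _ h').2



lemma psi8_lip (hr : 2 ≤ r) :
    ∀ u v, (G8 Ghat U c r).Adj u v → psi8 u ≤ psi8 v + 1 := by
  refine rel8_bound (Ghat := Ghat) hr (psi8) ?_ ?_ ?_ ?_ ?_ ?_ ?_ ?_ ?_
  · intro u w h; constructor <;>
      first
        | (simp only [psi8]; done)
        | (simp only [psi8]; omega)
        | (simp only [psi8]; norm_num; done)
        | (simp only [psi8]; norm_num; omega)
        | (simp only [psi8]; split <;> omega)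
        | (simp only [psi8]; split <;> split <;> omega)
        | (simp only [psi8]; norm_num; split <;> omega)
  · intro h; subst h; constructor <;>
      first
        | (simp only [psi8]; done)
        | (simp only [psi8]; omega)
        | (simp only [psi8]; norm_num; done)
        | (simp only [psi8]; norm_num; omega)
        | (simp only [psi8]; split <;> omega)
        | (simp only [psi8]; split <;> split <;> omega)
        | (simp only [psi8]; norm_num; split <;> omega)
  · intro j; constructor <;>
      first
        | (simp only [psi8]; done)
        | (simp only [psi8]; omega)
        | (simp only [psi8]; norm_num; done)
        | (simp only [psi8]; norm_num; omega)
        | (simp only [psi8]; split <;> omega)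
        | (simp only [psi8]; split <;> split <;> omega)
        | (simp only [psi8]; norm_num; split <;> omega)
  · intro o i hi; have hl := i.isLt; constructor <;>
      first
        | (simp only [psi8, hi]; done)
        | (simp only [psi8, hi]; omega)
        | (simp only [psi8, hi]; norm_num; done)
        | (simp only [psi8, hi]; norm_num; omega)
        | (simp only [psi8, hi]; split <;> omega)
        | (simp only [psi8, hi]; split <;> split <;> omega)
        | (simp only [psi8, hi]; norm_num; split <;> omega)
  · intro i hi; have hl := i.isLt; constructor <;>
      first
        | (simp only [psi8, hi]; done)
        | (simp only [psi8, hi]; omega)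
        | (simp only [psi8, hi]; norm_num; done)
        | (simp only [psi8, hi]; norm_num; omega)
        | (simp only [psi8, hi]; split <;> omega)
        | (simp only [psi8, hi]; split <;> split <;> omega)
        | (simp only [psi8, hi]; norm_num; split <;> omega)
  · intro o i j hij; have hl := i.isLt; have hl2 := j.isLt; constructor <;>
      first
        | (simp only [psi8]; done)
        | (simp only [psi8]; omega)
        | (simp only [psi8]; norm_num; done)
        | (simp only [psi8]; norm_num; omega)
        | (simp only [psi8]; split <;> omega)
        | (simp only [psi8]; split <;> split <;> omega)
        | (simp only [psi8]; norm_num; split <;> omega)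
  · intro i j hij; have hl := i.isLt; have hl2 := j.isLt; constructor <;>
      first
        | (simp only [psi8]; done)
        | (simp only [psi8]; omega)
        | (simp only [psi8]; norm_num; done)
        | (simp only [psi8]; norm_num; omega)
        | (simp only [psi8]; split <;> omega)
        | (simp only [psi8]; split <;> split <;> omega)
        | (simp only [psi8]; norm_num; split <;> omega)
  · intro o i hi; have hl := i.isLt; constructor <;>
      first
        | (simp only [psi8]; done)
        | (simp only [psi8]; omega)
        | (simp only [psi8]; norm_num; done)
        | (simp only [psi8]; norm_num; omega)
        | (simp only [psi8]; split <;> omega)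
        | (simp only [psi8]; split <;> split <;> omega)
        | (simp only [psi8]; norm_num; split <;> omega)
  · intro i hi; have hl := i.isLt; constructor <;>
      first
        | (simp only [psi8]; done)
        | (simp only [psi8]; omega)
        | (simp only [psi8]; norm_num; done)
        | (simp only [psi8]; norm_num; omega)
        | (simp only [psi8]; split <;> omega)
        | (simp only [psi8]; split <;> split <;> omega)
        | (simp only [psi8]; norm_num; split <;> omega)

lemma gamma8_lip (hr : 2 ≤ r) :
    ∀ u v, (G8 Ghat U c r).Adj u v → gamma8 u ≤ gamma8 v + 1 := by
  refine rel8_bound (Ghat := Ghat) hr (gamma8) ?_ ?_ ?_ ?_ ?_ ?_ ?_ ?_ ?_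
  · intro u w h; constructor <;>
      first
        | (simp only [gamma8]; done)
        | (simp only [gamma8]; omega)
        | (simp only [gamma8]; norm_num; done)
        | (simp only [gamma8]; norm_num; omega)
        | (simp only [gamma8]; split <;> omega)
        | (simp only [gamma8]; split <;> split <;> omega)
        | (simp only [gamma8]; norm_num; split <;> omega)
  · intro h; subst h; constructor <;>
      first
        | (simp only [gamma8]; done)
        | (simp only [gamma8]; omega)
        | (simp only [gamma8]; norm_num; done)
        | (simp only [gamma8]; norm_num; omega)
        | (simp only [gamma8]; split <;> omega)
        | (simp only [gamma8]; split <;> split <;> omega)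
        | (simp only [gamma8]; norm_num; split <;> omega)
  · intro j; constructor <;>
      first
        | (simp only [gamma8]; done)
        | (simp only [gamma8]; omega)
        | (simp only [gamma8]; norm_num; done)
        | (simp only [gamma8]; norm_num; omega)
        | (simp only [gamma8]; split <;> omega)
        | (simp only [gamma8]; split <;> split <;> omega)
        | (simp only [gamma8]; norm_num; split <;> omega)
  · intro o i hi; have hl := i.isLt; constructor <;>
      first
        | (simp only [gamma8, hi]; done)
        | (simp only [gamma8, hi]; omega)
        | (simp only [gamma8, hi]; norm_num; done)
        | (simp only [gamma8, hi]; norm_num; omega)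
        | (simp only [gamma8, hi]; split <;> omega)
        | (simp only [gamma8, hi]; split <;> split <;> omega)
        | (simp only [gamma8, hi]; norm_num; split <;> omega)
  · intro i hi; have hl := i.isLt; constructor <;>
      first
        | (simp only [gamma8, hi]; done)
        | (simp only [gamma8, hi]; omega)
        | (simp only [gamma8, hi]; norm_num; done)
        | (simp only [gamma8, hi]; norm_num; omega)
        | (simp only [gamma8, hi]; split <;> omega)
        | (simp only [gamma8, hi]; split <;> split <;> omega)
        | (simp only [gamma8, hi]; norm_num; split <;> omega)
  · intro o i j hij; have hl := i.isLt; have hl2 := j.isLt; constructor <;>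
      first
        | (simp only [gamma8]; done)
        | (simp only [gamma8]; omega)
        | (simp only [gamma8]; norm_num; done)
        | (simp only [gamma8]; norm_num; omega)
        | (simp only [gamma8]; split <;> omega)
        | (simp only [gamma8]; split <;> split <;> omega)
        | (simp only [gamma8]; norm_num; split <;> omega)
  · intro i j hij; have hl := i.isLt; have hl2 := j.isLt; constructor <;>
      first
        | (simp only [gamma8]; done)
        | (simp only [gamma8]; omega)
        | (simp only [gamma8]; norm_num; done)
        | (simp only [gamma8]; norm_num; omega)
        | (simp only [gamma8]; split <;> omega)
        | (simp only [gamma8]; split <;> split <;> omega)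
        | (simp only [gamma8]; norm_num; split <;> omega)
  · intro o i hi; have hl := i.isLt; constructor <;>
      first
        | (simp only [gamma8]; done)
        | (simp only [gamma8]; omega)
        | (simp only [gamma8]; norm_num; done)
        | (simp only [gamma8]; norm_num; omega)
        | (simp only [gamma8]; split <;> omega)
        | (simp only [gamma8]; split <;> split <;> omega)
        | (simp only [gamma8]; norm_num; split <;> omega)
  · intro i hi; have hl := i.isLt; constructor <;>
      first
        | (simp only [gamma8]; done)
        | (simp only [gamma8]; omega)
        | (simp only [gamma8]; norm_num; done)
        | (simp only [gamma8]; norm_num; omega)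
        | (simp only [gamma8]; split <;> omega)
        | (simp only [gamma8]; split <;> split <;> omega)
        | (simp only [gamma8]; norm_num; split <;> omega)

lemma d18_lip (hr : 2 ≤ r) :
    ∀ u v, (G8 Ghat U c r).Adj u v → d18 U u ≤ d18 U v + 1 := by
  refine rel8_bound (Ghat := Ghat) hr (d18 U) ?_ ?_ ?_ ?_ ?_ ?_ ?_ ?_ ?_
  · intro u w h; constructor <;>
      first
        | (simp only [d18]; done)
        | (simp only [d18]; omega)
        | (simp only [d18]; norm_num; done)
        | (simp only [d18]; norm_num; omega)
        | (simp only [d18]; split <;> omega)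
        | (simp only [d18]; split <;> split <;> omega)
        | (simp only [d18]; norm_num; split <;> omega)
  · intro h; subst h; constructor <;>
      first
        | (simp only [d18]; done)
        | (simp only [d18]; omega)
        | (simp only [d18]; norm_num; done)
        | (simp only [d18]; norm_num; omega)
        | (simp only [d18]; split <;> omega)
        | (simp only [d18]; split <;> split <;> omega)
        | (simp only [d18]; norm_num; split <;> omega)
  · intro j; constructor <;>
      first
        | (simp only [d18]; done)
        | (simp only [d18]; omega)
        | (simp only [d18]; norm_num; done)
        | (simp only [d18]; norm_num; omega)
        | (simp only [d18]; split <;> omega)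
        | (simp only [d18]; split <;> split <;> omega)
        | (simp only [d18]; norm_num; split <;> omega)
  · intro o i hi; have hl := i.isLt; constructor <;>
      first
        | (simp only [d18, hi]; done)
        | (simp only [d18, hi]; omega)
        | (simp only [d18, hi]; norm_num; done)
        | (simp only [d18, hi]; norm_num; omega)
        | (simp only [d18, hi]; split <;> omega)
        | (simp only [d18, hi]; split <;> split <;> omega)
        | (simp only [d18, hi]; norm_num; split <;> omega)
  · intro i hi; have hl := i.isLt; constructor <;>
      first
        | (simp only [d18, hi]; done)
        | (simp only [d18, hi]; omega)
        | (simp only [d18, hi]; norm_num; done)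
        | (simp only [d18, hi]; norm_num; omega)
        | (simp only [d18, hi]; split <;> omega)
        | (simp only [d18, hi]; split <;> split <;> omega)
        | (simp only [d18, hi]; norm_num; split <;> omega)
  · intro o i j hij; have hl := i.isLt; have hl2 := j.isLt; constructor <;>
      first
        | (simp only [d18]; done)
        | (simp only [d18]; omega)
        | (simp only [d18]; norm_num; done)
        | (simp only [d18]; norm_num; omega)
        | (simp only [d18]; split <;> omega)
        | (simp only [d18]; split <;> split <;> omega)
        | (simp only [d18]; norm_num; split <;> omega)
  · intro i j hij; have hl := i.isLt; have hl2 := j.isLt; constructor <;>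
      first
        | (simp only [d18]; done)
        | (simp only [d18]; omega)
        | (simp only [d18]; norm_num; done)
        | (simp only [d18]; norm_num; omega)
        | (simp only [d18]; split <;> omega)
        | (simp only [d18]; split <;> split <;> omega)
        | (simp only [d18]; norm_num; split <;> omega)
  · intro o i hi; have hl := i.isLt
    have ho : o.1 ∉ U := Finset.mem_compl.mp o.2
    constructor <;> (simp only [d18, if_neg ho]; omega)
  · intro i hi; have hl := i.isLt; constructor <;>
      first
        | (simp only [d18]; done)
        | (simp only [d18]; omega)
        | (simp only [d18]; norm_num; done)
        | (simp only [d18]; norm_num; omega)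
        | (simp only [d18]; split <;> omega)
        | (simp only [d18]; split <;> split <;> omega)
        | (simp only [d18]; norm_num; split <;> omega)

lemma adj8_of_rel (hr : 2 ≤ r) {x y : V8 U c r} (hne : x ≠ y)
    (h : Rel8 Ghat U c r x y) : (G8 Ghat U c r).Adj x y :=
  (adj8_iff hr).2 ⟨hne, Or.inl h⟩

/-- Walk from an internal vertex of an `a₁`–`o` path to `a₁`. -/
lemma walk_pinO (hr : 2 ≤ r) (o : {o : V // o ∈ Uᶜ}) (i : Fin (r - 1)) :
    ∃ w : (G8 Ghat U c r).Walk (.inr ⟨.inl o, i⟩) (.inl (.inr (.inl 0))),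
      w.length = (i : ℕ) + 1 := by
  obtain ⟨iv, hlt⟩ := i
  induction iv with
  | zero =>
    have ha : (G8 Ghat U c r).Adj (.inr ⟨.inl o, ⟨0, hlt⟩⟩) (.inl (.inr (.inl 0))) :=
      (adj8_of_rel hr (by simp)
        (Or.inr (Or.inr (Or.inr (Or.inl ⟨o, ⟨0, hlt⟩, rfl, rfl, rfl⟩))))).symm
    exact ⟨SimpleGraph.Walk.cons ha SimpleGraph.Walk.nil, rfl⟩
  | succ n ih =>
    obtain ⟨w, hw⟩ := ih (by first | omega | (simp only [len8]; omega))
    have ha : (G8 Ghat U c r).Adj (.inr ⟨.inl o, ⟨n + 1, hlt⟩⟩) (.inr ⟨.inl o, ⟨n, by first | omega | (simp only [len8]; omega)⟩⟩) :=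
      (adj8_of_rel hr (by intro h; have := congrArg (fun x : V8 U c r => match x with | .inr s => (s.2 : ℕ) | .inl _ => 0) h; simp at this) (Or.inr (Or.inr (Or.inr (Or.inr (Or.inr (Or.inl
        ⟨o, ⟨n, by first | omega | (simp only [len8]; omega)⟩, ⟨n + 1, hlt⟩, rfl, rfl, rfl⟩))))))).symm
    exact ⟨SimpleGraph.Walk.cons ha w, by show w.length + 1 = _; rw [hw]⟩

/-- Walk from an internal vertex of the `a₁`–`a₂` path to `a₁`. -/
lemma walk_pinA (hr : 2 ≤ r) (i : Fin (r - 1 - 1)) :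
    ∃ w : (G8 Ghat U c r).Walk (.inr ⟨.inr (.inl ()), i⟩) (.inl (.inr (.inl 0))),
      w.length = (i : ℕ) + 1 := by
  obtain ⟨iv, hlt⟩ := i
  induction iv with
  | zero =>
    have ha : (G8 Ghat U c r).Adj (.inr ⟨.inr (.inl ()), ⟨0, hlt⟩⟩) (.inl (.inr (.inl 0))) :=
      (adj8_of_rel hr (by simp)
        (Or.inr (Or.inr (Or.inr (Or.inr (Or.inl ⟨⟨0, hlt⟩, rfl, rfl, rfl⟩)))))).symm
    exact ⟨SimpleGraph.Walk.cons ha SimpleGraph.Walk.nil, rfl⟩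
  | succ n ih =>
    obtain ⟨w, hw⟩ := ih (by first | omega | (simp only [len8]; omega))
    have ha : (G8 Ghat U c r).Adj (.inr ⟨.inr (.inl ()), ⟨n + 1, hlt⟩⟩)
        (.inr ⟨.inr (.inl ()), ⟨n, by first | omega | (simp only [len8]; omega)⟩⟩) :=
      (adj8_of_rel hr (by intro h; have := congrArg (fun x : V8 U c r => match x with | .inr s => (s.2 : ℕ) | .inl _ => 0) h; simp at this) (Or.inr (Or.inr (Or.inr (Or.inr (Or.inr (Or.inr (Or.inl
        ⟨⟨n, by first | omega | (simp only [len8]; omega)⟩, ⟨n + 1, hlt⟩, rfl, rfl, rfl⟩)))))))).symm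
    exact ⟨SimpleGraph.Walk.cons ha w, by show w.length + 1 = _; rw [hw]⟩

/-- Walk from `o ∈ O` to `a₁`, of length `r`. -/
lemma walk_o (hr : 2 ≤ r) (o : {o : V // o ∈ Uᶜ}) :
    ∃ w : (G8 Ghat U c r).Walk (.inl (.inl o.1)) (.inl (.inr (.inl 0))),
      w.length = r := by
  obtain ⟨w, hw⟩ := walk_pinO (Ghat := Ghat) hr o ⟨r - 2, by first | omega | (simp only [len8]; omega)⟩
  have ha : (G8 Ghat U c r).Adj (.inl (.inl o.1)) (.inr ⟨.inl o, ⟨r - 2, by first | omega | (simp only [len8]; omega)⟩⟩) :=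
    (adj8_of_rel hr (by simp) (Or.inr (Or.inr (Or.inr (Or.inr (Or.inr (Or.inr (Or.inr
      (Or.inl ⟨o, ⟨r - 2, by first | omega | (simp only [len8]; omega)⟩, by first | omega | (simp only [len8]; omega), rfl, rfl⟩))))))))).symm
  exact ⟨SimpleGraph.Walk.cons ha w, by show w.length + 1 = r; rw [hw]; show r - 2 + 1 + 1 = r; omega⟩

/-- Walk from `a₂` to `a₁`, of length `r - 1`. -/
lemma walk_a2 (hr : 2 ≤ r) :
    ∃ w : (G8 Ghat U c r).Walk (.inl (.inr (.inl 1))) (.inl (.inr (.inl 0))),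
      w.length = r - 1 := by
  rcases eq_or_lt_of_le hr with h2 | h3
  · have ha : (G8 Ghat U c r).Adj (.inl (.inr (.inl 1))) (.inl (.inr (.inl 0))) :=
      (adj8_of_rel hr (by simp) (Or.inr (Or.inl ⟨h2.symm, rfl, rfl⟩))).symm
    exact ⟨SimpleGraph.Walk.cons ha SimpleGraph.Walk.nil, by simp; omega⟩
  · obtain ⟨w, hw⟩ := walk_pinA (Ghat := Ghat) (U := U) (c := c) hr ⟨r - 3, by first | omega | (simp only [len8]; omega)⟩
    have ha : (G8 Ghat U c r).Adj (.inl (.inr (.inl 1))) (.inr ⟨.inr (.inl ()), ⟨r - 3, by first | omega | (simp only [len8]; omega)⟩⟩) :=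
      (adj8_of_rel hr (by simp) (Or.inr (Or.inr (Or.inr (Or.inr (Or.inr (Or.inr (Or.inr
        (Or.inr ⟨⟨r - 3, by first | omega | (simp only [len8]; omega)⟩, by first | omega | (simp only [len8]; omega), rfl, rfl⟩))))))))).symm
    exact ⟨SimpleGraph.Walk.cons ha w, by show w.length + 1 = r - 1; rw [hw]; show r - 3 + 1 + 1 = r - 1; omega⟩

/-- Walk from `b j` to `a₁`, of length `r`. -/
lemma walk_b (hr : 2 ≤ r) (j : Fin c) :
    ∃ w : (G8 Ghat U c r).Walk (.inl (.inr (.inr j))) (.inl (.inr (.inl 0))),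
      w.length = r := by
  obtain ⟨w, hw⟩ := walk_a2 (Ghat := Ghat) (U := U) (c := c) hr
  have ha : (G8 Ghat U c r).Adj (.inl (.inr (.inr j))) (.inl (.inr (.inl 1))) :=
    (adj8_of_rel hr (by simp) (Or.inr (Or.inr (Or.inl ⟨j, rfl, rfl⟩)))).symm
  exact ⟨SimpleGraph.Walk.cons ha w, by first | (simp [hw]; omega) | (simp only [len8] at hw ⊢; simp [hw]; omega)⟩

/-- Walks in `Ĝ` lift to walks in the augmented graph. -/
lemma walk_vv (hr : 2 ≤ r) {u v : V} (q : Ghat.Walk u v) :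
    ∃ w : (G8 Ghat U c r).Walk (.inl (.inl u)) (.inl (.inl v)),
      w.length = q.length := by
  classical
  let f : Ghat →g G8 Ghat U c r :=
    ⟨fun v => .inl (.inl v), fun {a b} h => adj8_of_rel hr (by simp [h.ne])
      (Or.inl ⟨a, b, h, rfl, rfl⟩)⟩
  exact ⟨q.map f, SimpleGraph.Walk.length_map _ _⟩

/-- Short walks in the augmented graph ending in `V` project to walks of `Ĝ`. -/
lemma proj8 (hr : 2 ≤ r) : ∀ n : ℕ, n ≤ r →
    (∀ u v (w : (G8 Ghat U c r).Walk (.inl (.inl u)) (.inl (.inl v))), w.length = n →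
       ∃ q : Ghat.Walk u v, q.length ≤ n) ∧
    (∀ (o : {o : V // o ∈ Uᶜ}) (i : Fin (r - 1)) v
       (w : (G8 Ghat U c r).Walk (.inr ⟨.inl o, i⟩) (.inl (.inl v))), w.length = n →
       ∃ q : Ghat.Walk o.1 v, q.length + (r - 1 - (i : ℕ)) ≤ n) := by
  intro n
  induction n using Nat.strong_induction_on with
  | _ n IH =>
  intro hn
  constructor
  · intro u v w hw
    cases w with
    | nil => exact ⟨SimpleGraph.Walk.nil, by simp⟩
    | @cons _ y _ h w' =>
      simp only [SimpleGraph.Walk.length_cons] at hw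
      rw [adj8_iff hr] at h
      obtain ⟨hne, hrel | hrel⟩ := h
      · rcases hrel with ⟨u0, w0, hadj, hequ, rfl⟩ | ⟨_, hequ, _⟩ | ⟨j, hequ, _⟩ |
          ⟨o, i, hi, hequ, _⟩ | ⟨i, hi, hequ, _⟩ | ⟨o, i, j, hij, hequ, _⟩ |
          ⟨i, j, hij, hequ, _⟩ | ⟨o, i, hi, hequ, _⟩ | ⟨i, hi, hequ, _⟩ <;>
          try (exfalso; simp at hequ; done)
        obtain rfl : u = u0 := by simpa using hequ
        obtain ⟨q, hq⟩ := (IH w'.length (by omega) (by omega)).1 _ _ w' rfl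
        exact ⟨SimpleGraph.Walk.cons hadj q, by simp; omega⟩
      · rcases hrel with ⟨u0, w0, hadj, rfl, hequ⟩ | ⟨_, _, hequ⟩ | ⟨j, _, hequ⟩ |
          ⟨o, i, hi, _, hequ⟩ | ⟨i, hi, _, hequ⟩ | ⟨o, i, j, hij, _, hequ⟩ |
          ⟨i, j, hij, _, hequ⟩ | ⟨o, i, hi, rfl, hequ⟩ | ⟨i, hi, _, hequ⟩ <;>
          try (exfalso; simp at hequ; done)
        · obtain rfl : u = w0 := by simpa using hequ
          obtain ⟨q, hq⟩ := (IH w'.length (by omega) (by omega)).1 _ _ w' rfl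
          exact ⟨SimpleGraph.Walk.cons hadj.symm q, by simp; omega⟩
        · obtain rfl : u = o.1 := by simpa using hequ
          obtain ⟨q, hq⟩ := (IH w'.length (by omega) (by omega)).2 o i _ w' rfl
          exact ⟨q, by omega⟩
  · intro o i v w hw
    cases w with
    | @cons _ y _ h w' =>
      simp only [SimpleGraph.Walk.length_cons] at hw
      have hilt := i.isLt
      rw [adj8_iff hr] at h
      obtain ⟨hne, hrel | hrel⟩ := h
      · rcases hrel with ⟨u0, w0, hadj, hequ, _⟩ | ⟨_, hequ, _⟩ | ⟨j, hequ, _⟩ |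
          ⟨o', i', hi, hequ, _⟩ | ⟨i', hi, hequ, _⟩ | ⟨o', i', j', hij, hequ, rfl⟩ |
          ⟨i', j', hij, hequ, _⟩ | ⟨o', i', hi, hequ, rfl⟩ | ⟨i', hi, hequ, _⟩ <;>
          try (exfalso; cases hequ; done)
        · -- step down the path towards `o`
          obtain ⟨rfl, hieq⟩ : o = o' ∧ (i : ℕ) = (i' : ℕ) := by
            cases hequ; exact ⟨rfl, rfl⟩
          have hjlt := j'.isLt
          obtain ⟨q, hq⟩ := (IH w'.length (by omega) (by omega)).2 o j' _ w' rfl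
          exact ⟨q, by omega⟩
        · -- step from the last internal vertex to `o`
          obtain ⟨rfl, hieq⟩ : o = o' ∧ (i : ℕ) = (i' : ℕ) := by
            cases hequ; exact ⟨rfl, rfl⟩
          obtain ⟨q, hq⟩ := (IH w'.length (by omega) (by omega)).1 _ _ w' rfl
          exact ⟨q, by omega⟩
      · rcases hrel with ⟨u0, w0, hadj, _, hequ⟩ | ⟨_, _, hequ⟩ | ⟨j, _, hequ⟩ |
          ⟨o', i', hi, rfl, hequ⟩ | ⟨i', hi, _, hequ⟩ | ⟨o', i', j', hij, rfl, hequ⟩ |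
          ⟨i', j', hij, _, hequ⟩ | ⟨o', i', hi, _, hequ⟩ | ⟨i', hi, _, hequ⟩ <;>
          try (exfalso; cases hequ; done)
        · -- step up to `a₁`: impossible, the rest of the walk would be too long
          obtain ⟨rfl, hieq⟩ : o = o' ∧ (i : ℕ) = (i' : ℕ) := by
            cases hequ; exact ⟨rfl, rfl⟩
          have hpot := pot_le psi8 (psi8_lip hr) w'
          simp [psi8] at hpot
          omega
        · -- step down the path towards `o` (other orientation)
          obtain ⟨rfl, hieq⟩ : o = o' ∧ (i : ℕ) = (j' : ℕ) := by
            cases hequ; exact ⟨rfl, rfl⟩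
          have hilt' := i'.isLt
          obtain ⟨q, hq⟩ := (IH w'.length (by omega) (by omega)).2 o i' _ w' rfl
          exact ⟨q, by omega⟩

end Aux

/-- Let `G'` be obtained from `Ĝ` by adding new vertices
`a₁, a₂, b₁, …, b_c`, the edges `a₂b₁, …, a₂b_c`, connecting `a₁` to every vertex of
`O = V(Ĝ) ∖ U` by a path of length `r`, and `a₁` to `a₂` by a path of length `r − 1`.
Then `G'` has an `(r,c)`-scattered set of size at least `k + c` iff there is `I ⊆ U` of
size at least `k` with `|N^r_Ĝ[v] ∩ I| ≤ c` for every vertex `v` of `Ĝ`. -/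
theorem scattered_kernel_back {V : Type*} [Fintype V] [DecidableEq V]
    (Ghat : SimpleGraph V) (U : Finset V) (r c k : ℕ) (hr : 2 ≤ r) (hc : 1 ≤ c) :
    (∃ I' : Set ((V ⊕ (Fin 2 ⊕ Fin c)) ⊕
          (Σ p : ({o : V // o ∈ Uᶜ} ⊕ (Unit ⊕ Fin c)), Fin (len8 U c r p - 1))),
        k + c ≤ I'.ncard ∧
        ∀ x, ({y | ∃ w : (Ghat.addPaths (Fin 2 ⊕ Fin c) ({o : V // o ∈ Uᶜ} ⊕ (Unit ⊕ Fin c))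
                (src8 U c) (dst8 U c) (len8 U c r)).Walk y x, w.length ≤ r} ∩ I').ncard ≤ c) ↔
    (∃ I : Set V, I ⊆ (U : Set V) ∧ k ≤ I.ncard ∧
        ∀ v : V, ({y : V | ∃ w : Ghat.Walk y v, w.length ≤ r} ∩ I).ncard ≤ c) := by
  classical
  constructor
  · -- forward direction
    rintro ⟨I', hcard, hscat⟩
    have hA := hscat (.inl (.inr (.inl 0)))
    set A : Set (V8 U c r) :=
      {y | ∃ w : (G8 Ghat U c r).Walk y (.inl (.inr (.inl 0))), w.length ≤ r} with hAdef
    set I : Set V := {u : V | u ∈ U ∧ (.inl (.inl u) : V8 U c r) ∈ I'} with hIdef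
    have hA2 : (A ∩ I').ncard ≤ c := hA
    have hsub : I' \ (A ∩ I') ⊆ (fun u => (.inl (.inl u) : V8 U c r)) '' I := by
      rintro x ⟨hxI, hxA⟩
      have hxA' : x ∉ A := fun h => hxA ⟨h, hxI⟩
      obtain ((u | (j | j)) | ⟨(o | u | j), i⟩) := x
      · by_cases hu : u ∈ U
        · exact ⟨u, ⟨hu, hxI⟩, rfl⟩
        · exfalso
          obtain ⟨w, hw⟩ := walk_o (Ghat := Ghat) hr ⟨u, Finset.mem_compl.2 hu⟩
          exact hxA' ⟨w, le_of_eq hw⟩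
      · exfalso
        rcases Fin.exists_fin_two.mp ⟨j, rfl⟩ with h | h
        all_goals obtain rfl : j = _ := h
        · exact hxA' ⟨SimpleGraph.Walk.nil, by simp⟩
        · obtain ⟨w, hw⟩ := walk_a2 (Ghat := Ghat) (U := U) (c := c) hr
          exact hxA' ⟨w, by omega⟩
      · exfalso
        obtain ⟨w, hw⟩ := walk_b (Ghat := Ghat) (U := U) hr j
        exact hxA' ⟨w, le_of_eq hw⟩
      · exfalso
        have hi := i.isLt
        obtain ⟨w, hw⟩ := walk_pinO (Ghat := Ghat) hr o i
        exact hxA' ⟨w, by simp only [len8] at hi; omega⟩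
      · exfalso
        have hi := i.isLt
        obtain ⟨⟩ := u
        obtain ⟨w, hw⟩ := walk_pinA (Ghat := Ghat) (U := U) (c := c) hr i
        exact hxA' ⟨w, by simp only [len8] at hi; omega⟩
      · exact absurd i.isLt (by simp [len8])
    refine ⟨I, fun u hu => hu.1, ?_, ?_⟩
    · have h1 := Set.ncard_le_ncard_diff_add_ncard I' (A ∩ I') (Set.toFinite _)
      have h2 := Set.ncard_le_ncard hsub (Set.toFinite _)
      have h3 : ((fun u => (.inl (.inl u) : V8 U c r)) '' I).ncard = I.ncard :=
        Set.ncard_image_of_injective _ (fun a b h => by simpa using h)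
      have h4 : k + c ≤ I.ncard + c :=
        le_trans hcard (le_trans h1 (add_le_add (le_trans h2 (le_of_eq h3)) hA2))
      omega
    · intro v
      have hv2 : ({y | ∃ w : (G8 Ghat U c r).Walk y (.inl (.inl v)), w.length ≤ r} ∩
          I').ncard ≤ c := hscat (.inl (.inl v))
      have hsub2 : (fun u => (.inl (.inl u) : V8 U c r)) ''
          ({y : V | ∃ w : Ghat.Walk y v, w.length ≤ r} ∩ I) ⊆
          {y | ∃ w : (G8 Ghat U c r).Walk y (.inl (.inl v)), w.length ≤ r} ∩ I' := by
        rintro _ ⟨u, ⟨⟨q, hq⟩, hu⟩, rfl⟩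
        obtain ⟨w, hw⟩ := walk_vv (U := U) (c := c) hr q
        exact ⟨⟨w, by omega⟩, hu.2⟩
      have h2 := Set.ncard_le_ncard hsub2 (Set.toFinite _)
      have h3 := Set.ncard_image_of_injective
        ({y : V | ∃ w : Ghat.Walk y v, w.length ≤ r} ∩ I)
        (fun a b h => by simpa using (h : (.inl (.inl a) : V8 U c r) = .inl (.inl b)))
      exact le_trans h3.ge (le_trans h2 hv2)
  · -- backward direction
    rintro ⟨I, hIU, hIcard, hIscat⟩
    have hvvinj : Function.Injective (fun u => (.inl (.inl u) : V8 U c r)) :=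
      fun a b h => by simpa using h
    have hbbinj : Function.Injective (fun j : Fin c => (.inl (.inr (.inr j)) : V8 U c r)) :=
      fun a b h => by simpa using h
    set Ib : Set (V8 U c r) := Set.range (fun j : Fin c => (.inl (.inr (.inr j)) : V8 U c r))
      with hIbdef
    have hIbcard : Ib.ncard = c := by
      rw [hIbdef, ← Set.image_univ, Set.ncard_image_of_injective _ hbbinj, Set.ncard_univ]
      simp
    refine ⟨(fun u => (.inl (.inl u) : V8 U c r)) '' I ∪ Ib, ?_, ?_⟩
    · have hdisj : Disjoint ((fun u => (.inl (.inl u) : V8 U c r)) '' I) Ib := by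
        rw [Set.disjoint_left]
        rintro _ ⟨u, _, rfl⟩ ⟨j, hj⟩
        simp at hj
      rw [Set.ncard_union_eq hdisj (Set.toFinite _) (Set.toFinite _),
        Set.ncard_image_of_injective _ hvvinj, hIbcard]
      omega
    · intro x
      obtain ((v | (j | j)) | ⟨(o | u | j), i⟩) := x
      · -- x is an original vertex
        have hsub : {y | ∃ w : (G8 Ghat U c r).Walk y (.inl (.inl v)), w.length ≤ r} ∩
            ((fun u => (.inl (.inl u) : V8 U c r)) '' I ∪ Ib) ⊆
            (fun u => (.inl (.inl u) : V8 U c r)) ''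
              ({y : V | ∃ w : Ghat.Walk y v, w.length ≤ r} ∩ I) := by
          rintro z ⟨⟨w, hw⟩, (⟨u, huI, rfl⟩ | ⟨j, rfl⟩)⟩
          · obtain ⟨q, hq⟩ := (proj8 (Ghat := Ghat) (U := U) (c := c) hr w.length hw).1
              u v w rfl
            exact ⟨u, ⟨⟨q, le_trans hq hw⟩, huI⟩, rfl⟩
          · exfalso
            have hpot := pot_le gamma8 (gamma8_lip hr) w.reverse
            simp [gamma8] at hpot
            omega
        calc ({y | ∃ w : (G8 Ghat U c r).Walk y (.inl (.inl v)), w.length ≤ r} ∩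
            ((fun u => (.inl (.inl u) : V8 U c r)) '' I ∪ Ib)).ncard
            ≤ ((fun u => (.inl (.inl u) : V8 U c r)) ''
              ({y : V | ∃ w : Ghat.Walk y v, w.length ≤ r} ∩ I)).ncard :=
              Set.ncard_le_ncard hsub (Set.toFinite _)
          _ = ({y : V | ∃ w : Ghat.Walk y v, w.length ≤ r} ∩ I).ncard :=
              Set.ncard_image_of_injective _ hvvinj
          _ ≤ c := hIscat v
      · -- x is a₁ or a₂
        have hsub : {y | ∃ w : (G8 Ghat U c r).Walk y (.inl (.inr (.inl j))), w.length ≤ r} ∩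
            ((fun u => (.inl (.inl u) : V8 U c r)) '' I ∪ Ib) ⊆ Ib := by
          rintro z ⟨⟨w, hw⟩, (⟨u, huI, rfl⟩ | hz)⟩
          · exfalso
            rcases Fin.exists_fin_two.mp ⟨j, rfl⟩ with h | h
            all_goals obtain rfl : j = _ := h
            · have hpot := pot_le (d18 U) (d18_lip hr) w
              have hu : u ∈ U := hIU huI
              simp [d18, hu] at hpot
              omega
            · have hpot := pot_le psi8 (psi8_lip hr) w.reverse
              simp [psi8] at hpot
              omega
          · exact hz
        calc _ ≤ Ib.ncard := Set.ncard_le_ncard hsub (Set.toFinite _)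
          _ = c := hIbcard
      · -- x is some b
        have hsub : {y | ∃ w : (G8 Ghat U c r).Walk y (.inl (.inr (.inr j))), w.length ≤ r} ∩
            ((fun u => (.inl (.inl u) : V8 U c r)) '' I ∪ Ib) ⊆ Ib := by
          rintro z ⟨⟨w, hw⟩, (⟨u, huI, rfl⟩ | hz)⟩
          · exfalso
            have hpot := pot_le psi8 (psi8_lip hr) w.reverse
            simp [psi8] at hpot
            omega
          · exact hz
        calc _ ≤ Ib.ncard := Set.ncard_le_ncard hsub (Set.toFinite _)
          _ = c := hIbcard
      · -- x is an internal vertex of an a₁–o path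
        have hilt := i.isLt
        simp only [len8] at hilt
        have hsub : {y | ∃ w : (G8 Ghat U c r).Walk y (.inr ⟨.inl o, i⟩), w.length ≤ r} ∩
            ((fun u => (.inl (.inl u) : V8 U c r)) '' I ∪ Ib) ⊆
            (fun u => (.inl (.inl u) : V8 U c r)) ''
              ({y : V | ∃ w : Ghat.Walk y o.1, w.length ≤ r} ∩ I) := by
          rintro z ⟨⟨w, hw⟩, (⟨u, huI, rfl⟩ | ⟨j, rfl⟩)⟩
          · have hw' : w.reverse.length ≤ r := by rw [SimpleGraph.Walk.length_reverse]; omega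
            obtain ⟨q, hq⟩ := (proj8 (Ghat := Ghat) (U := U) (c := c) hr
              w.reverse.length hw').2 o i u w.reverse rfl
            refine ⟨u, ⟨⟨q.reverse, ?_⟩, huI⟩, rfl⟩
            rw [SimpleGraph.Walk.length_reverse] at *
            omega
          · exfalso
            have hpot := pot_le gamma8 (gamma8_lip hr) w.reverse
            simp [gamma8] at hpot
            omega
        calc _ ≤ ((fun u => (.inl (.inl u) : V8 U c r)) ''
              ({y : V | ∃ w : Ghat.Walk y o.1, w.length ≤ r} ∩ I)).ncard :=
              Set.ncard_le_ncard hsub (Set.toFinite _)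
          _ = ({y : V | ∃ w : Ghat.Walk y o.1, w.length ≤ r} ∩ I).ncard :=
              Set.ncard_image_of_injective _ hvvinj
          _ ≤ c := hIscat o.1
      · -- x is an internal vertex of the a₁–a₂ path
        obtain ⟨⟩ := u
        have hsub : {y | ∃ w : (G8 Ghat U c r).Walk y (.inr ⟨.inr (.inl ()), i⟩),
              w.length ≤ r} ∩
            ((fun u => (.inl (.inl u) : V8 U c r)) '' I ∪ Ib) ⊆ Ib := by
          rintro z ⟨⟨w, hw⟩, (⟨u, huI, rfl⟩ | hz)⟩
          · exfalso
            have hpot := pot_le psi8 (psi8_lip hr) w.reverse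
            simp [psi8] at hpot
            omega
          · exact hz
        calc _ ≤ Ib.ncard := Set.ncard_le_ncard hsub (Set.toFinite _)
          _ = c := hIbcard
      · exact absurd i.isLt (by simp [len8])
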